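/- arXiv:0911.5513 — 2 statements merged into one kernel-verified Lean document; each statement's English description precedes it below -/
import Mathlib

section
/- For every integer n ≥ 0 and every complex number N with (2N+n)_n ≠ 0, and every complex X, the Gegenbauer polynomial satisfies C_n^N(X) = ((-2i)^n (N)_n / ((2N+n)_n · n!)) · Ĥ_n^{1/2-N-n}(-iX), where Ĥ is the scaled relativistic Hermite polynomial. -/
open Finset Polynomial


lemma asc_split (a b : ℕ) (x : ℂ) :
    (ascPochhammer ℂ (a + b)).eval x =
      (ascPochhammer ℂ a).eval x * (ascPochhammer ℂ b).eval (x + a) := by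
  rw [← ascPochhammer_mul, eval_mul, eval_comp, eval_add, eval_X, eval_natCast]

lemma asc_reflect (j : ℕ) (x : ℂ) :
    (ascPochhammer ℂ j).eval x =
      (-1) ^ j * (ascPochhammer ℂ j).eval (-x - j + 1) := by
  rw [show x = -(-x) by ring, ascPochhammer_eval_neg_eq_descPochhammer,
    descPochhammer_eval_eq_ascPochhammer]
  ring_nf

lemma asc_dup (n : ℕ) (y : ℂ) :
    (ascPochhammer ℂ n).eval (2 * y) =
      2 ^ n * (ascPochhammer ℂ ((n + 1) / 2)).eval y *
        (ascPochhammer ℂ (n / 2)).eval (y + 1 / 2) := by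
  induction n with
  | zero => simp
  | succ n ih =>
    rw [ascPochhammer_succ_eval, ih]
    rcases Nat.even_or_odd n with ⟨m, hm⟩ | ⟨m, hm⟩
    · subst hm
      have h1 : (m + m + 1 + 1) / 2 = m + 1 := by omega
      have h2 : (m + m + 1) / 2 = m := by omega
      have h3 : (m + m) / 2 = m := by omega
      simp only [h1, h2, h3, ascPochhammer_succ_eval]
      push_cast
      ring
    · subst hm
      have h1 : (2 * m + 1 + 1 + 1) / 2 = m + 1 := by omega
      have h2 : (2 * m + 1 + 1) / 2 = m + 1 := by omega
      have h3 : (2 * m + 1) / 2 = m := by omega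
      simp only [h1, h2, h3, ascPochhammer_succ_eval]
      push_cast
      ring

lemma asc_reflect' (j : ℕ) (x : ℂ) :
    (-1 : ℂ) ^ j * (ascPochhammer ℂ j).eval x = (ascPochhammer ℂ j).eval (-x - j + 1) := by
  rw [asc_reflect j (-x - j + 1), show -(-x - (j:ℂ) + 1) - j + 1 = x by ring]

lemma key (n k : ℕ) (hk : k ≤ n / 2) (N : ℂ) :
    (ascPochhammer ℂ (n - k)).eval N * (ascPochhammer ℂ n).eval (2 * N + (n : ℂ)) =
      2 ^ n * (-1) ^ (n - k) * (ascPochhammer ℂ n).eval N *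
        (ascPochhammer ℂ ((n + 1) / 2)).eval (1 / 2 - N - (n : ℂ)) *
        (ascPochhammer ℂ (n / 2 - k)).eval (1 / 2 - N - (n : ℂ) + 1 / 2 + (k : ℂ)) := by
  rcases Nat.even_or_odd n with ⟨m, hm⟩ | ⟨m, hm⟩
  · have hkm : k ≤ m := by omega
    subst hm
    have e1 : m + m - k = m + (m - k) := by omega
    have e2 : (m + m + 1) / 2 = m := by omega
    have e3 : (m + m) / 2 = m := by omega
    rw [e1, e2, e3,
      show (1 / 2 - N - ((m + m : ℕ) : ℂ) + 1 / 2 + (k : ℂ))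
          = -(N + (m : ℂ)) - ((m - k : ℕ) : ℂ) + 1 by
        push_cast [Nat.cast_sub hkm]; ring,
      ← asc_reflect' (m - k) (N + (m : ℂ)),
      show (1 / 2 - N - ((m + m : ℕ) : ℂ)) = -(N + (m : ℂ) + 1 / 2) - (m : ℂ) + 1 by
        push_cast; ring,
      ← asc_reflect' m (N + (m : ℂ) + 1 / 2),
      show (2 * N + ((m + m : ℕ) : ℂ)) = 2 * (N + (m : ℂ)) by push_cast; ring,
      asc_dup, e2, e3, asc_split m (m - k) N, asc_split m m N, pow_add]
    ring_nf
    simp [pow_mul', neg_one_sq]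
  · have hkm : k ≤ m := by omega
    subst hm
    have e1 : 2 * m + 1 - k = (m + 1) + (m - k) := by omega
    have e2 : (2 * m + 1 + 1) / 2 = m + 1 := by omega
    have e3 : (2 * m + 1) / 2 = m := by omega
    rw [e1, e2, e3,
      show (1 / 2 - N - ((2 * m + 1 : ℕ) : ℂ) + 1 / 2 + (k : ℂ))
          = -(N + (m : ℂ) + 1) - ((m - k : ℕ) : ℂ) + 1 by
        push_cast [Nat.cast_sub hkm]; ring,
      ← asc_reflect' (m - k) (N + (m : ℂ) + 1),
      show (1 / 2 - N - ((2 * m + 1 : ℕ) : ℂ)) = -(N + (m : ℂ) + 1 / 2) - ((m + 1 : ℕ) : ℂ) + 1 by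
        push_cast; ring,
      ← asc_reflect' (m + 1) (N + (m : ℂ) + 1 / 2),
      show (2 * N + ((2 * m + 1 : ℕ) : ℂ)) = 2 * (N + (m : ℂ) + 1 / 2) by push_cast; ring,
      asc_dup, e2, e3, asc_split (m + 1) (m - k) N,
      show ascPochhammer ℂ (2 * m + 1) = ascPochhammer ℂ (m + 1 + m) by rw [show 2 * m + 1 = m + 1 + m by omega],
      asc_split (m + 1) m N, pow_add,
      show N + ((m + 1 : ℕ) : ℂ) = N + (m : ℂ) + 1 by push_cast; ring,
      show N + (m : ℂ) + 1 / 2 + 1 / 2 = N + (m : ℂ) + 1 by ring]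
    ring_nf
    simp [pow_mul', neg_one_sq]

/-- The Gegenbauer polynomial `C_n^N(X)` (complex parameter and argument). -/
noncomputable def Geg (n : ℕ) (N X : ℂ) : ℂ :=
  ∑ k ∈ Finset.range (n / 2 + 1),
    (-1) ^ k * ((ascPochhammer ℂ (n - k)).eval N /
      (((n - 2 * k).factorial : ℂ) * (k.factorial : ℂ))) * (2 * X) ^ (n - 2 * k)

/-- The scaled relativistic Hermite polynomial `Ĥ_n^N(X)`, a polynomial in both `N` and `X`;
for real `N > 0` it equals `N^(n/2) * H_n^N(X√N)`.  Here the quotient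
`(2N)_n / (N + 1/2)_k` has been rewritten, using `(2N)_n = 2^n (N)_⌈n/2⌉ (N+1/2)_⌊n/2⌋`,
as the polynomial `2^n (N)_⌈n/2⌉ (N + 1/2 + k)_(⌊n/2⌋ - k)`. -/
noncomputable def Hhat (n : ℕ) (N X : ℂ) : ℂ :=
  ∑ k ∈ Finset.range (n / 2 + 1),
    (-1) ^ k * (ascPochhammer ℂ ((n + 1) / 2)).eval N *
      (ascPochhammer ℂ (n / 2 - k)).eval (N + 1 / 2 + (k : ℂ)) *
      ((n.factorial : ℂ) / (((n - 2 * k).factorial : ℂ) * (k.factorial : ℂ))) *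
      (2 * X) ^ (n - 2 * k)

/-- `C_n^N(X) = ((-2i)^n (N)_n / ((2N+n)_n · n!)) · Ĥ_n^{1/2-N-n}(-iX)`. -/
theorem gegenbauer_eq_Hhat (n : ℕ) (N : ℂ)
    (h : (ascPochhammer ℂ n).eval (2 * N + (n : ℂ)) ≠ 0) (X : ℂ) :
    Geg n N X =
      (-2 * Complex.I) ^ n * (ascPochhammer ℂ n).eval N /
          ((ascPochhammer ℂ n).eval (2 * N + (n : ℂ)) * (n.factorial : ℂ)) *
        Hhat n (1 / 2 - N - (n : ℂ)) (-Complex.I * X) := by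
  unfold Geg Hhat
  rw [Finset.mul_sum]
  refine Finset.sum_congr rfl fun k hk => ?_
  have hk2 : k ≤ n / 2 := Nat.lt_succ_iff.mp (Finset.mem_range.mp hk)
  have hi : (-Complex.I) ^ n * (-Complex.I) ^ (n - 2 * k) = (-1) ^ (n - k) := by
    rw [← pow_add, show n + (n - 2 * k) = 2 * (n - k) by omega, pow_mul]
    norm_num
  have hkey := key n k hk2 N
  have hf1 : ((n - 2 * k).factorial : ℂ) ≠ 0 := Nat.cast_ne_zero.mpr (Nat.factorial_ne_zero _)
  have hf2 : ((k).factorial : ℂ) ≠ 0 := Nat.cast_ne_zero.mpr (Nat.factorial_ne_zero _)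
  have hf3 : ((n).factorial : ℂ) ≠ 0 := Nat.cast_ne_zero.mpr (Nat.factorial_ne_zero _)
  rw [show (2 * (-Complex.I * X)) ^ (n - 2 * k) = (-Complex.I) ^ (n - 2 * k) * (2 * X) ^ (n - 2 * k) by
    rw [← mul_pow]; ring_nf,
    show (-2 * Complex.I) ^ n = 2 ^ n * (-Complex.I) ^ n by rw [← mul_pow]; ring_nf]
  field_simp
  ring_nf
  ring_nf at hkey hi
  linear_combination
    (X ^ (n - k * 2) * 2 ^ (n - k * 2)) * hkey -
    (X ^ (n - k * 2) * 2 ^ (n - k * 2) * 2 ^ n *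
        Polynomial.eval N (ascPochhammer ℂ n) *
        Polynomial.eval (1 / 2 - N - (n : ℂ)) (ascPochhammer ℂ ((1 + n) / 2)) *
        Polynomial.eval (1 - N - (n : ℂ) + (k : ℂ)) (ascPochhammer ℂ (n / 2 - k))) * hi
end

section
/- Let μ be a Borel probability measure on ℝ all of whose absolute moments ∫|z|^m dμ(z) are finite, and for each integer m ≥ 0 define P_m(X) = ∫_ℝ (X + iz)^m dμ(z). Then for every integer n ≥ 0 and every real X, the Turán (Hankel) determinant det[(P_{j+k}(X))_{0≤j,k≤n}] equals ((-1)^{n(n+1)/2}/(n+1)!) · ∫_{ℝ^{n+1}} Π_{0≤j<k≤n} (z_j - z_k)² dμ(z_0)⋯dμ(z_n); in particular it does not depend on X. -/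
open Finset MeasureTheory


private lemma aux_moment_int (μ : Measure ℝ) [IsProbabilityMeasure μ]
    (hmom : ∀ m : ℕ, Integrable (fun z : ℝ => |z| ^ m) μ) (X : ℝ) (m : ℕ) :
    Integrable (fun z : ℝ => ((X : ℂ) + Complex.I * z) ^ m) μ := by
  have hmeas : AEStronglyMeasurable (fun z : ℝ => ((X : ℂ) + Complex.I * z) ^ m) μ :=
    ((continuous_const.add (continuous_const.mul Complex.continuous_ofReal)).pow
      m).aestronglyMeasurable
  have hbound : Integrable (fun z : ℝ => (|X| + |z|) ^ m) μ := by
    have h : (fun z : ℝ => (|X| + |z|) ^ m)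
        = fun z => ∑ k ∈ Finset.range (m + 1), |X| ^ k * |z| ^ (m - k) * (m.choose k : ℝ) := by
      funext z; rw [add_pow]
    rw [h]
    refine integrable_finset_sum _ fun k _ => ?_
    simpa [mul_comm, mul_assoc, mul_left_comm] using
      (((hmom (m - k)).const_mul (|X| ^ k)).mul_const (m.choose k : ℝ))
  refine hbound.mono' hmeas (Filter.Eventually.of_forall fun z => ?_)
  have h1 : ‖(X : ℂ) + Complex.I * z‖ ≤ |X| + |z| := by
    refine (norm_add_le _ _).trans ?_
    simp [Complex.norm_real, Real.norm_eq_abs]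
  calc ‖((X : ℂ) + Complex.I * z) ^ m‖ = ‖(X : ℂ) + Complex.I * z‖ ^ m := norm_pow _ _
    _ ≤ (|X| + |z|) ^ m := pow_le_pow_left₀ (norm_nonneg _) h1 m

private lemma aux_prod_integral (μ : Measure ℝ) [IsProbabilityMeasure μ] {n : ℕ}
    (f : Fin (n + 1) → ℝ → ℂ) :
    (∫ z : Fin (n + 1) → ℝ, ∏ k, f k (z k) ∂(Measure.pi fun _ => μ)) = ∏ k, ∫ z, f k z ∂μ := by
  letI : MeasureSpace ℝ := ⟨μ⟩
  haveI : SigmaFinite (volume : Measure ℝ) := inferInstanceAs (SigmaFinite μ)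
  exact MeasureTheory.integral_fintype_prod_eq_prod f

private lemma aux_prod_integrable (μ : Measure ℝ) [IsProbabilityMeasure μ] {n : ℕ}
    (f : Fin (n + 1) → ℝ → ℂ) (hf : ∀ k, Integrable (f k) μ) :
    Integrable (fun z : Fin (n + 1) → ℝ => ∏ k, f k (z k)) (Measure.pi fun _ => μ) := by
  letI : MeasureSpace ℝ := ⟨μ⟩
  haveI : SigmaFinite (volume : Measure ℝ) := inferInstanceAs (SigmaFinite μ)
  exact MeasureTheory.Integrable.fintype_prod hf

private lemma aux_perm_mp (μ : Measure ℝ) [IsProbabilityMeasure μ] {n : ℕ}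
    (σ : Equiv.Perm (Fin (n + 1))) :
    ∃ e : (Fin (n + 1) → ℝ) ≃ᵐ (Fin (n + 1) → ℝ),
      MeasurePreserving e (Measure.pi fun _ => μ) (Measure.pi fun _ => μ) ∧
      ∀ z, e z = z ∘ σ := by
  refine ⟨MeasurableEquiv.piCongrLeft (fun _ : Fin (n + 1) => ℝ) σ⁻¹,
    measurePreserving_piCongrLeft (fun _ => μ) σ⁻¹, fun z => ?_⟩
  funext i
  simp [MeasurableEquiv.coe_piCongrLeft, Equiv.piCongrLeft_apply_apply, Equiv.Perm.inv_def,
    Equiv.piCongrLeft_apply]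

private lemma aux_perm_integral (μ : Measure ℝ) [IsProbabilityMeasure μ] {n : ℕ}
    (σ : Equiv.Perm (Fin (n + 1))) (g : (Fin (n + 1) → ℝ) → ℂ) :
    (∫ z : Fin (n + 1) → ℝ, g (z ∘ σ) ∂(Measure.pi fun _ => μ))
      = ∫ z, g z ∂(Measure.pi fun _ => μ) := by
  obtain ⟨e, hmp, he⟩ := aux_perm_mp μ σ
  rw [← hmp.integral_comp' g]
  exact integral_congr_ae (Filter.Eventually.of_forall fun z => by simp only [he])

private lemma aux_perm_integrable (μ : Measure ℝ) [IsProbabilityMeasure μ] {n : ℕ}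
    (σ : Equiv.Perm (Fin (n + 1))) (g : (Fin (n + 1) → ℝ) → ℂ)
    (hg : Integrable g (Measure.pi fun _ => μ)) :
    Integrable (fun z : Fin (n + 1) → ℝ => g (z ∘ σ)) (Measure.pi fun _ => μ) := by
  obtain ⟨e, hmp, he⟩ := aux_perm_mp μ σ
  have := (hmp.integrable_comp_emb e.measurableEmbedding).2 hg
  refine this.congr (Filter.Eventually.of_forall fun z => ?_)
  simp only [Function.comp_apply, he]

private lemma aux_det_factor {n : ℕ} (w : Fin (n + 1) → ℂ) :
    (Matrix.of fun j k : Fin (n + 1) => w k ^ ((j : ℕ) + (k : ℕ))).det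
      = (∏ k : Fin (n + 1), w k ^ (k : ℕ)) * (Matrix.vandermonde w).det := by
  have h : (Matrix.of fun j k : Fin (n + 1) => w k ^ ((j : ℕ) + (k : ℕ)))
      = Matrix.transpose (Matrix.vandermonde w) * Matrix.diagonal (fun k => w k ^ (k : ℕ)) := by
    ext j k
    simp [Matrix.mul_diagonal, Matrix.vandermonde, pow_add]
  rw [h, Matrix.det_mul, Matrix.det_transpose, Matrix.det_diagonal, mul_comm]

private lemma aux_vdm_perm {n : ℕ} (w : Fin (n + 1) → ℂ) (σ : Equiv.Perm (Fin (n + 1))) :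
    (Matrix.vandermonde (w ∘ σ)).det
      = ((Equiv.Perm.sign σ : ℤ) : ℂ) * (Matrix.vandermonde w).det := by
  have h : Matrix.vandermonde (w ∘ σ) = (Matrix.vandermonde w).submatrix σ id := by
    ext i j; simp [Matrix.vandermonde]
  rw [h, Matrix.det_permute]

private lemma aux_pairs {m : ℕ} (h : Fin m → Fin m → ℂ) :
    ∏ p ∈ Finset.univ.filter (fun p : Fin m × Fin m => p.1 < p.2), h p.1 p.2
      = ∏ i : Fin m, ∏ j ∈ Finset.Ioi i, h i j := by
  rw [Finset.prod_finset_product (univ.filter fun p : Fin m × Fin m => p.1 < p.2) univ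
    (fun i => Finset.Ioi i) (by simp [Finset.mem_Ioi])]

private lemma aux_count (n : ℕ) : (∑ i : Fin (n + 1), (Finset.Ioi i).card) = n * (n + 1) / 2 := by
  simp only [Fin.card_Ioi]
  rw [Fin.sum_univ_eq_sum_range (fun i => n + 1 - 1 - i),
    Finset.sum_range_reflect (fun j => j) (n + 1), Finset.sum_range_id, mul_comm]
  simp


/-- If `P_m(X) = ∫ (X + iz)^m dμ(z)` for a probability measure `μ` with all absolute
moments finite, then the Turán (Hankel) determinant `det[(P_(j+k)(X))_(0≤j,k≤n)]` equals
`((-1)^(n(n+1)/2)/(n+1)!) ∫ Π_(j<k) (z_j - z_k)² dμ(z_0)⋯dμ(z_n)`;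
in particular it does not depend on `X`. -/
theorem turan_hankel_determinant (μ : Measure ℝ) [IsProbabilityMeasure μ]
    (hmom : ∀ m : ℕ, Integrable (fun z : ℝ => |z| ^ m) μ)
    (P : ℕ → ℝ → ℂ) (hP : ∀ (m : ℕ) (X : ℝ), P m X = ∫ z, ((X : ℂ) + Complex.I * z) ^ m ∂μ)
    (n : ℕ) (X : ℝ) :
    Matrix.det (Matrix.of fun j k : Fin (n + 1) => P ((j : ℕ) + (k : ℕ)) X) =
      ((-1) ^ (n * (n + 1) / 2) / ((n + 1).factorial : ℂ)) *
        ∫ z : Fin (n + 1) → ℝ,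
          (∏ p ∈ Finset.univ.filter (fun p : Fin (n + 1) × Fin (n + 1) => p.1 < p.2),
            (((z p.1 - z p.2 : ℝ) : ℂ)) ^ 2) ∂(Measure.pi fun _ => μ) := by
  classical
  set π : Measure (Fin (n + 1) → ℝ) := Measure.pi fun _ => μ with hπ
  set f : ℕ → ℝ → ℂ := fun m z => ((X : ℂ) + Complex.I * z) ^ m with hfdef
  have hfi : ∀ m, Integrable (f m) μ := fun m => aux_moment_int μ hmom X m
  set w : (Fin (n + 1) → ℝ) → Fin (n + 1) → ℂ :=
    fun z k => (X : ℂ) + Complex.I * (z k) with hwdef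
  set F : (Fin (n + 1) → ℝ) → ℂ :=
    fun z => (Matrix.of fun j k : Fin (n + 1) => f ((j : ℕ) + (k : ℕ)) (z k)).det with hFdef
  set V : (Fin (n + 1) → ℝ) → ℂ := fun z => (Matrix.vandermonde (w z)).det with hVdef
  -- expansion of F as a sum over permutations
  have hFsum : ∀ z, F z = ∑ σ : Equiv.Perm (Fin (n + 1)),
      ((Equiv.Perm.sign σ : ℤ) : ℂ) * ∏ k, f (((σ k : ℕ)) + (k : ℕ)) (z k) := by
    intro z
    simp only [hFdef, Matrix.det_apply, Matrix.of_apply, Units.smul_def, zsmul_eq_mul]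
  -- integrability of each permutation term
  have hterm : ∀ σ : Equiv.Perm (Fin (n + 1)),
      Integrable (fun z : Fin (n + 1) → ℝ => ∏ k, f (((σ k : ℕ)) + (k : ℕ)) (z k)) π :=
    fun σ => aux_prod_integrable μ _ fun k => hfi _
  have hFint : Integrable F π := by
    have : Integrable (fun z : Fin (n + 1) → ℝ => ∑ σ : Equiv.Perm (Fin (n + 1)),
        ((Equiv.Perm.sign σ : ℤ) : ℂ) * ∏ k, f (((σ k : ℕ)) + (k : ℕ)) (z k)) π :=
      integrable_finset_sum _ fun σ _ => (hterm σ).const_mul _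
    exact this.congr (Filter.Eventually.of_forall fun z => (hFsum z).symm)
  -- Step A : the Hankel determinant is the integral of F
  have stepA : (Matrix.of fun j k : Fin (n + 1) => P ((j : ℕ) + (k : ℕ)) X).det
      = ∫ z, F z ∂π := by
    rw [Matrix.det_apply]
    have h1 : ∀ σ : Equiv.Perm (Fin (n + 1)),
        (∏ k, (Matrix.of fun j k : Fin (n + 1) => P ((j : ℕ) + (k : ℕ)) X) (σ k) k)
          = ∫ z, ∏ k, f (((σ k : ℕ)) + (k : ℕ)) (z k) ∂π := by
      intro σ
      rw [aux_prod_integral μ fun k => f (((σ k : ℕ)) + (k : ℕ))]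
      exact Finset.prod_congr rfl fun k _ => by
        simp only [Matrix.of_apply]; rw [hP]
    calc ∑ σ : Equiv.Perm (Fin (n + 1)), Equiv.Perm.sign σ •
          ∏ k, (Matrix.of fun j k : Fin (n + 1) => P ((j : ℕ) + (k : ℕ)) X) (σ k) k
        = ∑ σ : Equiv.Perm (Fin (n + 1)),
            ∫ z, ((Equiv.Perm.sign σ : ℤ) : ℂ) * ∏ k, f (((σ k : ℕ)) + (k : ℕ)) (z k) ∂π := by
          refine Finset.sum_congr rfl fun σ _ => ?_
          rw [Units.smul_def, zsmul_eq_mul, h1 σ]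
          exact (integral_const_mul _ _).symm
      _ = ∫ z, ∑ σ : Equiv.Perm (Fin (n + 1)),
            ((Equiv.Perm.sign σ : ℤ) : ℂ) * ∏ k, f (((σ k : ℕ)) + (k : ℕ)) (z k) ∂π :=
          (integral_finset_sum _ fun σ _ => (hterm σ).const_mul _).symm
      _ = ∫ z, F z ∂π :=
          integral_congr_ae (Filter.Eventually.of_forall fun z => (hFsum z).symm)
  -- pointwise factorization of F
  have hFfac : ∀ z, F z = (∏ k : Fin (n + 1), w z k ^ (k : ℕ)) * V z := by
    intro z
    exact aux_det_factor (w z)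
  -- the symmetrization identity
  have hsymm : ∀ z : Fin (n + 1) → ℝ,
      (∑ σ : Equiv.Perm (Fin (n + 1)), F (z ∘ σ)) = V z ^ 2 := by
    intro z
    have h1 : ∀ σ : Equiv.Perm (Fin (n + 1)), F (z ∘ σ)
        = (∏ k : Fin (n + 1), w z (σ k) ^ (k : ℕ))
            * (((Equiv.Perm.sign σ : ℤ) : ℂ) * V z) := by
      intro σ
      have hVp : V (z ∘ σ) = ((Equiv.Perm.sign σ : ℤ) : ℂ) * V z := by
        simp only [hVdef]
        have hw : w (z ∘ σ) = w z ∘ σ := rfl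
        rw [hw, aux_vdm_perm]
      rw [hFfac (z ∘ σ), hVp]
      rfl
    have h2 : (∑ σ : Equiv.Perm (Fin (n + 1)),
        ((Equiv.Perm.sign σ : ℤ) : ℂ) * ∏ k : Fin (n + 1), w z (σ k) ^ (k : ℕ)) = V z := by
      simp only [hVdef, Matrix.det_apply, Matrix.vandermonde_apply, Units.smul_def,
        zsmul_eq_mul]
    calc (∑ σ : Equiv.Perm (Fin (n + 1)), F (z ∘ σ))
        = ∑ σ : Equiv.Perm (Fin (n + 1)),
            (((Equiv.Perm.sign σ : ℤ) : ℂ) * ∏ k : Fin (n + 1), w z (σ k) ^ (k : ℕ)) * V z := by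
          refine Finset.sum_congr rfl fun σ _ => ?_
          rw [h1 σ]; ring
      _ = V z * V z := by rw [← Finset.sum_mul, h2]
      _ = V z ^ 2 := (sq (V z)).symm
  -- the square of the Vandermonde determinant
  have hVsq : ∀ z : Fin (n + 1) → ℝ, V z ^ 2
      = (-1) ^ (n * (n + 1) / 2) *
          ∏ p ∈ Finset.univ.filter (fun p : Fin (n + 1) × Fin (n + 1) => p.1 < p.2),
            (((z p.1 - z p.2 : ℝ) : ℂ)) ^ 2 := by
    intro z
    simp only [hVdef]
    rw [Matrix.det_vandermonde, aux_pairs (fun i j => (((z i - z j : ℝ) : ℂ)) ^ 2)]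
    rw [← Finset.prod_pow]
    have : ∀ i : Fin (n + 1), (∏ j ∈ Finset.Ioi i, (w z j - w z i)) ^ 2
        = (-1) ^ (Finset.Ioi i).card * ∏ j ∈ Finset.Ioi i, (((z i - z j : ℝ) : ℂ)) ^ 2 := by
      intro i
      rw [← Finset.prod_pow, ← Finset.prod_const, ← Finset.prod_mul_distrib]
      refine Finset.prod_congr rfl fun j _ => ?_
      have : w z j - w z i = Complex.I * ((z j : ℂ) - (z i : ℂ)) := by
        simp only [hwdef]; ring
      rw [this, mul_pow, Complex.I_sq]
      push_cast
      ring
    rw [Finset.prod_congr rfl fun i _ => this i, Finset.prod_mul_distrib,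
      Finset.prod_pow_eq_pow_sum, aux_count]
  -- Step B : symmetrization of the integral
  have stepB : ((n + 1).factorial : ℂ) * ∫ z, F z ∂π
      = (-1) ^ (n * (n + 1) / 2) *
          ∫ z : Fin (n + 1) → ℝ,
            (∏ p ∈ Finset.univ.filter (fun p : Fin (n + 1) × Fin (n + 1) => p.1 < p.2),
              (((z p.1 - z p.2 : ℝ) : ℂ)) ^ 2) ∂π := by
    calc ((n + 1).factorial : ℂ) * ∫ z, F z ∂π
        = ∑ _σ : Equiv.Perm (Fin (n + 1)), ∫ z, F z ∂π := by
          rw [Finset.sum_const, Finset.card_univ, Fintype.card_perm, Fintype.card_fin,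
            nsmul_eq_mul]
      _ = ∑ σ : Equiv.Perm (Fin (n + 1)), ∫ z, F (z ∘ σ) ∂π :=
          Finset.sum_congr rfl fun σ _ => (aux_perm_integral μ σ F).symm
      _ = ∫ z, ∑ σ : Equiv.Perm (Fin (n + 1)), F (z ∘ σ) ∂π :=
          (integral_finset_sum _ fun σ _ => aux_perm_integrable μ σ F hFint).symm
      _ = ∫ z, V z ^ 2 ∂π :=
          integral_congr_ae (Filter.Eventually.of_forall fun z => hsymm z)
      _ = ∫ z : Fin (n + 1) → ℝ, (-1) ^ (n * (n + 1) / 2) *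
            (∏ p ∈ Finset.univ.filter (fun p : Fin (n + 1) × Fin (n + 1) => p.1 < p.2),
              (((z p.1 - z p.2 : ℝ) : ℂ)) ^ 2) ∂π :=
          integral_congr_ae (Filter.Eventually.of_forall fun z => hVsq z)
      _ = _ := integral_const_mul _ _
  have hfactne : ((n + 1).factorial : ℂ) ≠ 0 := by
    exact_mod_cast Nat.cast_ne_zero.mpr (Nat.factorial_ne_zero (n + 1))
  rw [stepA, div_mul_eq_mul_div, eq_div_iff hfactne, mul_comm]
  exact stepB
end
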